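/- For all a, b ∈ ℝ, the first-order Taylor remainder of the truncated double-well potential satisfies |F(b) − F(a) − f(a)(b − a)| ≤ (b − a)²; in particular F(b) − F(a) ≤ f(a)(b − a) + (b − a)². (This is the estimate, with L/2 = 1, that makes the explicit stabilized treatment of the double-well potential energy stable.) -/
import Mathlib


/-- The truncated double-well potential. -/
noncomputable def F (φ : ℝ) : ℝ :=
  if φ < -1 then (φ + 1) ^ 2
  else if φ ≤ 1 then (1 / 4) * (φ ^ 2 - 1) ^ 2
  else (φ - 1) ^ 2

/-- The derivative of the truncated double-well potential. -/
noncomputable def f (φ : ℝ) : ℝ :=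
  if φ < -1 then 2 * (φ + 1)
  else if φ ≤ 1 then φ ^ 3 - φ
  else 2 * (φ - 1)

set_option maxHeartbeats 3200000 in
/-- First-order Taylor remainder estimate for the truncated double-well potential:
`|F(b) - F(a) - f(a)(b-a)| ≤ (b-a)²`, and in particular
`F(b) - F(a) ≤ f(a)(b-a) + (b-a)²`. -/
theorem F_taylor_remainder :
    ∀ a b : ℝ,
      |F b - F a - f a * (b - a)| ≤ (b - a) ^ 2 ∧
      F b - F a ≤ f a * (b - a) + (b - a) ^ 2 := by
  intro a b
  have h : |F b - F a - f a * (b - a)| ≤ (b - a) ^ 2 := by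
    rw [abs_le]
    unfold F f
    split_ifs <;> constructor
    all_goals try nlinarith [sq_nonneg (a + b), sq_nonneg (a - b), sq_nonneg (a + 1), sq_nonneg (a - 1), sq_nonneg (b + 1), sq_nonneg (b - 1), sq_nonneg (a*b - 1), sq_nonneg (a*b + 1)]
    -- Case A lower: -1 ≤ a ≤ 1, b < -1
    · nlinarith [sq_nonneg (b + 1),
        mul_nonneg (mul_nonneg (show (0:ℝ) ≤ a + 1 by linarith) (show (0:ℝ) ≤ -(b+1) by linarith)) (sq_nonneg (2*a - 1)),
        mul_nonneg (show (0:ℝ) ≤ a + 1 by linarith) (show (0:ℝ) ≤ -(b+1) by linarith),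
        mul_nonneg (sq_nonneg (a + 1)) (sq_nonneg (3*a - 1)), sq_nonneg (a + 1)]
    -- Case A upper
    · nlinarith [mul_nonneg (sq_nonneg (a + 1)) (show (0:ℝ) ≤ 5 - 3*a by linarith),
        mul_nonneg (mul_nonneg (show (0:ℝ) ≤ a + 1 by linarith) (show (0:ℝ) ≤ -(b+1) by linarith)) (show (0:ℝ) ≤ 2 - a by linarith)]
    -- Case B upper: a < -1, -1 ≤ b ≤ 1
    · nlinarith [mul_nonneg (mul_nonneg (mul_nonneg (show (0:ℝ) ≤ b + 1 by linarith) (show (0:ℝ) ≤ b + 1 by linarith)) (show (0:ℝ) ≤ b + 1 by linarith)) (show (0:ℝ) ≤ 3 - b by linarith),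
        sq_nonneg (a + 1), mul_nonneg (show (0:ℝ) ≤ -(a+1) by linarith) (show (0:ℝ) ≤ b + 1 by linarith)]
    -- Case C upper: both in [-1,1]
    · nlinarith [mul_nonneg (mul_nonneg (show (0:ℝ) ≤ 1 - a by linarith) (show (0:ℝ) ≤ a + 1 by linarith)) (sq_nonneg (b - a)),
        mul_nonneg (mul_nonneg (show (0:ℝ) ≤ 1 - b by linarith) (show (0:ℝ) ≤ b + 1 by linarith)) (sq_nonneg (b - a)),
        mul_nonneg (sq_nonneg (a - b)) (sq_nonneg (b - a))]
    -- Case D upper: a > 1, -1 ≤ b ≤ 1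
    · nlinarith [mul_nonneg (mul_nonneg (mul_nonneg (show (0:ℝ) ≤ 1 - b by linarith) (show (0:ℝ) ≤ 1 - b by linarith)) (show (0:ℝ) ≤ 1 - b by linarith)) (show (0:ℝ) ≤ 3 + b by linarith),
        sq_nonneg (a - 1), mul_nonneg (show (0:ℝ) ≤ a - 1 by linarith) (show (0:ℝ) ≤ 1 - b by linarith)]
    -- Case E lower: -1 ≤ a ≤ 1, b > 1
    · nlinarith [sq_nonneg (b - 1),
        mul_nonneg (mul_nonneg (show (0:ℝ) ≤ 1 - a by linarith) (show (0:ℝ) ≤ b - 1 by linarith)) (sq_nonneg (2*a + 1)),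
        mul_nonneg (show (0:ℝ) ≤ 1 - a by linarith) (show (0:ℝ) ≤ b - 1 by linarith),
        mul_nonneg (sq_nonneg (1 - a)) (sq_nonneg (3*a + 1)), sq_nonneg (1 - a)]
    -- Case E upper
    · nlinarith [mul_nonneg (sq_nonneg (1 - a)) (show (0:ℝ) ≤ 5 + 3*a by linarith),
        mul_nonneg (mul_nonneg (show (0:ℝ) ≤ 1 - a by linarith) (show (0:ℝ) ≤ b - 1 by linarith)) (show (0:ℝ) ≤ 2 + a by linarith)]
  refine ⟨h, ?_⟩
  have := (abs_le.mp h).2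
  linarith
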